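/- Let U ⊆ ℝ² be open and let u : U → ℂ be twice continuously differentiable. For λ ∈ ℂ∖{0} define A_λ, B_λ : U → M₂(ℂ) by A_λ = (1/4)·[[i·u_y, −e^{u/2} − λ⁻¹·e^{−u/2}], [e^{u/2} + λ·e^{−u/2}, −i·u_y]] and B_λ = (i/4)·[[−u_x, e^{u/2} − λ⁻¹·e^{−u/2}], [e^{u/2} − λ·e^{−u/2}, u_x]], where u_x, u_y denote the partial derivatives of u with respect to the two real coordinates. Then for every point p ∈ U and every λ ∈ ℂ∖{0}, the zero-curvature (Maurer–Cartan, integrability) equation ∂_y A_λ(p) − ∂_x B_λ(p) = A_λ(p)·B_λ(p) − B_λ(p)·A_λ(p) holds if and only if u satisfies the sinh-Gordon equation u_xx(p) + u_yy(p) + sinh(u(p)) = 0 at p. -/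

import Mathlib

open Complex

noncomputable section

/-- Partial derivative of `u` with respect to the first real coordinate. -/
noncomputable def px (u : ℝ × ℝ → ℂ) (p : ℝ × ℝ) : ℂ := deriv (fun t => u (t, p.2)) p.1

/-- Partial derivative of `u` with respect to the second real coordinate. -/
noncomputable def py (u : ℝ × ℝ → ℂ) (p : ℝ × ℝ) : ℂ := deriv (fun t => u (p.1, t)) p.2

/-- The matrix `A_λ` (the `dx`-part of the connection form `α_λ`). -/
noncomputable def Aconn (u : ℝ × ℝ → ℂ) (lam : ℂ) (p : ℝ × ℝ) : Matrix (Fin 2) (Fin 2) ℂ :=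
  (1 / 4 : ℂ) •
    !![Complex.I * py u p, -Complex.exp (u p / 2) - lam⁻¹ * Complex.exp (-u p / 2);
       Complex.exp (u p / 2) + lam * Complex.exp (-u p / 2), -(Complex.I * py u p)]

/-- The matrix `B_λ` (the `dy`-part of the connection form `α_λ`). -/
noncomputable def Bconn (u : ℝ × ℝ → ℂ) (lam : ℂ) (p : ℝ × ℝ) : Matrix (Fin 2) (Fin 2) ℂ :=
  (Complex.I / 4) •
    !![-(px u p), Complex.exp (u p / 2) - lam⁻¹ * Complex.exp (-u p / 2);
       Complex.exp (u p / 2) - lam * Complex.exp (-u p / 2), px u p]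

/-- For a twice continuously differentiable `u` on an open set `U ⊆ ℝ²`,
the zero-curvature (Maurer–Cartan) equation `∂_y A_λ − ∂_x B_λ = A_λ·B_λ − B_λ·A_λ` holds at a
point `p ∈ U` for `λ ≠ 0` if and only if `u` satisfies the sinh-Gordon equation
`u_xx + u_yy + sinh u = 0` at `p`. -/
theorem zero_curvature_iff_sinhGordon
    (U : Set (ℝ × ℝ)) (hU : IsOpen U) (u : ℝ × ℝ → ℂ) (hu : ContDiffOn ℝ 2 u U) :
    ∀ p ∈ U, ∀ lam : ℂ, lam ≠ 0 →
      ((∀ i j : Fin 2,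
          deriv (fun t => Aconn u lam (p.1, t) i j) p.2
              - deriv (fun t => Bconn u lam (t, p.2) i j) p.1
            = (Aconn u lam p * Bconn u lam p - Bconn u lam p * Aconn u lam p) i j)
        ↔ px (px u) p + py (py u) p + Complex.sinh (u p) = 0) := by
  intro p hp lam hlam
  have hdu : DifferentiableAt ℝ u p :=
    (hu.differentiableOn (by norm_num)).differentiableAt (hU.mem_nhds hp)
  have hx : HasDerivAt (fun t : ℝ => u (t, p.2)) (px u p) p.1 := by
    have h1 : DifferentiableAt ℝ (fun t : ℝ => u (t, p.2)) p.1 :=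
      hdu.comp p.1 (DifferentiableAt.prodMk differentiableAt_fun_id (differentiableAt_const _))
    exact h1.hasDerivAt
  have hy : HasDerivAt (fun t : ℝ => u (p.1, t)) (py u p) p.2 := by
    have h1 : DifferentiableAt ℝ (fun t : ℝ => u (p.1, t)) p.2 :=
      hdu.comp p.2 (DifferentiableAt.prodMk (differentiableAt_const _) differentiableAt_fun_id)
    exact h1.hasDerivAt
  set E : ℂ := Complex.exp (u p / 2) with hE
  set F : ℂ := Complex.exp (-u p / 2) with hF
  set q : ℂ := py u p with hq
  set r : ℂ := px u p with hr
  set Q : ℂ := py (py u) p with hQ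
  set R : ℂ := px (px u) p with hR
  have hEy : HasDerivAt (fun t : ℝ => Complex.exp (u (p.1, t) / 2)) (E * (q / 2)) p.2 :=
    (hy.div_const 2).cexp
  have hFy : HasDerivAt (fun t : ℝ => Complex.exp (-u (p.1, t) / 2)) (F * (-q / 2)) p.2 :=
    (hy.neg.div_const 2).cexp
  have hEx : HasDerivAt (fun t : ℝ => Complex.exp (u (t, p.2) / 2)) (E * (r / 2)) p.1 :=
    (hx.div_const 2).cexp
  have hFx : HasDerivAt (fun t : ℝ => Complex.exp (-u (t, p.2) / 2)) (F * (-r / 2)) p.1 :=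
    (hx.neg.div_const 2).cexp
  have dA00 : deriv (fun t => Aconn u lam (p.1, t) 0 0) p.2 = 1/4 * (Complex.I * Q) := by
    rw [show (fun t : ℝ => Aconn u lam (p.1, t) 0 0)
        = fun t => (1/4 : ℂ) * (Complex.I * py u (p.1, t)) from funext fun t => by simp [Aconn]]
    rw [deriv_const_mul_field, deriv_const_mul_field] <;> rfl
  have dA11 : deriv (fun t => Aconn u lam (p.1, t) 1 1) p.2 = -(1/4) * (Complex.I * Q) := by
    rw [show (fun t : ℝ => Aconn u lam (p.1, t) 1 1)
        = fun t => (-(1/4) * Complex.I : ℂ) * py u (p.1, t) from funext fun t => by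
          simp [Aconn]; try ring]
    rw [deriv_const_mul_field]
    show -(1/4) * Complex.I * Q = _
    ring
  have dA01 : deriv (fun t => Aconn u lam (p.1, t) 0 1) p.2
      = 1/4 * (-(E * (q / 2)) - lam⁻¹ * (F * (-q / 2))) := by
    rw [show (fun t : ℝ => Aconn u lam (p.1, t) 0 1)
        = fun t => (1/4 : ℂ) * (-Complex.exp (u (p.1, t) / 2)
            - lam⁻¹ * Complex.exp (-u (p.1, t) / 2)) from funext fun t => by simp [Aconn]]
    exact ((hEy.neg.sub (hFy.const_mul lam⁻¹)).const_mul (1/4 : ℂ)).deriv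
  have dA10 : deriv (fun t => Aconn u lam (p.1, t) 1 0) p.2
      = 1/4 * (E * (q / 2) + lam * (F * (-q / 2))) := by
    rw [show (fun t : ℝ => Aconn u lam (p.1, t) 1 0)
        = fun t => (1/4 : ℂ) * (Complex.exp (u (p.1, t) / 2)
            + lam * Complex.exp (-u (p.1, t) / 2)) from funext fun t => by simp [Aconn]]
    exact ((hEy.add (hFy.const_mul lam)).const_mul (1/4 : ℂ)).deriv
  have dB00 : deriv (fun t => Bconn u lam (t, p.2) 0 0) p.1 = -(Complex.I/4) * R := by
    rw [show (fun t : ℝ => Bconn u lam (t, p.2) 0 0)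
        = fun t => (-(Complex.I/4) : ℂ) * px u (t, p.2) from funext fun t => by
          simp [Bconn]; try ring]
    rw [deriv_const_mul_field] <;> rfl
  have dB11 : deriv (fun t => Bconn u lam (t, p.2) 1 1) p.1 = (Complex.I/4) * R := by
    rw [show (fun t : ℝ => Bconn u lam (t, p.2) 1 1)
        = fun t => ((Complex.I/4) : ℂ) * px u (t, p.2) from funext fun t => by
          simp [Bconn]]
    rw [deriv_const_mul_field] <;> rfl
  have dB01 : deriv (fun t => Bconn u lam (t, p.2) 0 1) p.1
      = Complex.I/4 * (E * (r / 2) - lam⁻¹ * (F * (-r / 2))) := by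
    rw [show (fun t : ℝ => Bconn u lam (t, p.2) 0 1)
        = fun t => (Complex.I/4 : ℂ) * (Complex.exp (u (t, p.2) / 2)
            - lam⁻¹ * Complex.exp (-u (t, p.2) / 2)) from funext fun t => by simp [Bconn]]
    exact ((hEx.sub (hFx.const_mul lam⁻¹)).const_mul (Complex.I/4 : ℂ)).deriv
  have dB10 : deriv (fun t => Bconn u lam (t, p.2) 1 0) p.1
      = Complex.I/4 * (E * (r / 2) - lam * (F * (-r / 2))) := by
    rw [show (fun t : ℝ => Bconn u lam (t, p.2) 1 0)
        = fun t => (Complex.I/4 : ℂ) * (Complex.exp (u (t, p.2) / 2)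
            - lam * Complex.exp (-u (t, p.2) / 2)) from funext fun t => by simp [Bconn]]
    exact ((hEx.sub (hFx.const_mul lam)).const_mul (Complex.I/4 : ℂ)).deriv
  have hEF : E * F = 1 := by
    rw [hE, hF, ← Complex.exp_add, show u p / 2 + -u p / 2 = 0 by ring, Complex.exp_zero]
  have hE2 : E * E = Complex.exp (u p) := by
    rw [hE, ← Complex.exp_add]; ring_nf
  have hF2 : F * F = Complex.exp (-u p) := by
    rw [hF, ← Complex.exp_add]; ring_nf
  have hll : lam * lam⁻¹ = 1 := mul_inv_cancel₀ hlam
  have hI : Complex.I * Complex.I = -1 := Complex.I_mul_I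
  have hsinh : Complex.sinh (u p) = (Complex.exp (u p) - Complex.exp (-u p)) / 2 := rfl
  constructor
  · intro h
    have h00 := h 0 0
    rw [dA00, dB00] at h00
    simp only [Aconn, Bconn, Matrix.sub_apply, Matrix.mul_apply, Fin.sum_univ_two,
      Matrix.smul_apply, Matrix.cons_val', Matrix.cons_val_zero, Matrix.cons_val_one,
      Matrix.head_cons, Matrix.head_fin_const, Matrix.empty_val', Matrix.cons_val_fin_one,
      smul_eq_mul, Matrix.of_apply] at h00
    rw [← hE, ← hF, ← hq, ← hr] at h00
    have key : Complex.I/4 * (Q + R)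
        = Complex.I/8 * (-(E * E) + lam * lam⁻¹ * (F * F)) := by linear_combination h00
    rw [hsinh]
    linear_combination (-4 * Complex.I) * key
      + ((Q + R) + E * E / 2 - lam * lam⁻¹ * (F * F) / 2) * hI
      + (-(1/2 : ℂ)) * hE2 + (1/2 : ℂ) * hF2 + (F * F / 2) * hll
  · intro h i j
    rw [hsinh] at h
    have expand : ∀ i j : Fin 2,
        (Aconn u lam p * Bconn u lam p - Bconn u lam p * Aconn u lam p) i j
          = (Aconn u lam p i 0 * Bconn u lam p 0 j + Aconn u lam p i 1 * Bconn u lam p 1 j)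
            - (Bconn u lam p i 0 * Aconn u lam p 0 j + Bconn u lam p i 1 * Aconn u lam p 1 j) := by
      intro i j
      simp [Matrix.mul_apply, Fin.sum_univ_two]
    have eA : ∀ i j : Fin 2, True := fun _ _ => trivial
    fin_cases i <;> fin_cases j <;>
      simp only [Fin.zero_eta, Fin.mk_one, Fin.isValue, id_eq]
    · rw [dA00, dB00, expand]
      simp only [Aconn, Bconn, Matrix.smul_apply, Matrix.cons_val', Matrix.cons_val_zero,
        Matrix.cons_val_one, Matrix.head_cons, Matrix.head_fin_const, Matrix.empty_val',
        Matrix.cons_val_fin_one, smul_eq_mul, Matrix.of_apply]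
      rw [← hE, ← hF, ← hq, ← hr]
      linear_combination (Complex.I/4) * h + (Complex.I/8) * hE2 - (Complex.I/8) * hF2
        - (Complex.I/8 * (F * F)) * hll
    · rw [dA01, dB01, expand]
      simp only [Aconn, Bconn, Matrix.smul_apply, Matrix.cons_val', Matrix.cons_val_zero,
        Matrix.cons_val_one, Matrix.head_cons, Matrix.head_fin_const, Matrix.empty_val',
        Matrix.cons_val_fin_one, smul_eq_mul, Matrix.of_apply]
      rw [← hE, ← hF, ← hq, ← hr]
      linear_combination (-(q/8) * (E - lam⁻¹ * F)) * hI
    · rw [dA10, dB10, expand]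
      simp only [Aconn, Bconn, Matrix.smul_apply, Matrix.cons_val', Matrix.cons_val_zero,
        Matrix.cons_val_one, Matrix.head_cons, Matrix.head_fin_const, Matrix.empty_val',
        Matrix.cons_val_fin_one, smul_eq_mul, Matrix.of_apply]
      rw [← hE, ← hF, ← hq, ← hr]
      linear_combination ((q/8) * (E - lam * F)) * hI
    · rw [dA11, dB11, expand]
      simp only [Aconn, Bconn, Matrix.smul_apply, Matrix.cons_val', Matrix.cons_val_zero,
        Matrix.cons_val_one, Matrix.head_cons, Matrix.head_fin_const, Matrix.empty_val',
        Matrix.cons_val_fin_one, smul_eq_mul, Matrix.of_apply]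
      rw [← hE, ← hF, ← hq, ← hr]
      linear_combination (-(Complex.I/4)) * h - (Complex.I/8) * hE2 + (Complex.I/8) * hF2
        + (Complex.I/8 * (F * F)) * hll
end
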